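/- Let G be a 2-connected locally nonforesty graph that is not isomorphic to K_4, and let S be the set of vertices of G of degree exactly 3. Then the subgraph of G induced by S has maximum degree at most 1 (i.e., G[S] is a disjoint union of isolated vertices and a matching). -/
import Mathlib


/-- A graph `G` is locally nonforesty if for every vertex `v`, the subgraph induced by
the neighborhood of `v` contains a cycle (i.e., is not acyclic). -/
def LocallyNonforesty {V : Type*} (G : SimpleGraph V) : Prop :=
  ∀ v : V, ¬ (G.induce (G.neighborSet v)).IsAcyclic

/-- A graph is `k`-connected if it has more than `k` vertices and deleting any set of
fewer than `k` vertices leaves a connected graph. -/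
def KConnected {V : Type*} [Fintype V] (G : SimpleGraph V) (k : ℕ) : Prop :=
  k < Fintype.card V ∧
    ∀ S : Finset V, S.card < k → (G.induce ((↑S : Set V)ᶜ)).Connected

open SimpleGraph

lemma triangle_of_not_acyclic {W : Type*} [Fintype W] (hW : Fintype.card W = 3)
    (H : SimpleGraph W) (h : ¬ H.IsAcyclic) : ∀ a b : W, a ≠ b → H.Adj a b := by
  simp only [SimpleGraph.IsAcyclic, not_forall, not_not] at h
  obtain ⟨w, c, hc⟩ := h
  have h3 : 3 ≤ c.length := hc.three_le_length
  have hle : c.length ≤ 3 := by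
    have hnd := hc.support_nodup
    have h1 := hnd.length_le_card
    rw [hW] at h1
    have hlen : c.support.tail.length = c.length := by
      simp [List.length_tail, SimpleGraph.Walk.length_support]
    omega
  have hlen3 : c.length = 3 := le_antisymm hle h3
  have hnd := hc.support_nodup
  cases c with
  | nil => simp at hlen3
  | cons h1 p =>
    cases p with
    | nil => simp at hlen3
    | cons h2 q =>
      cases q with
      | nil => simp at hlen3
      | cons h3' r =>
        cases r with
        | cons h4 s => simp [Walk.length_cons] at hlen3
        | nil =>
          rename_i x y
          simp [Walk.support_cons] at hnd
          obtain ⟨⟨hxy, hxw⟩, hyw⟩ := hnd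
          classical
          have huniv : ∀ z : W, z = w ∨ z = x ∨ z = y := by
            have hcard : ({w, x, y} : Finset W).card = 3 := by
              rw [Finset.card_insert_of_notMem (by simp [Ne.symm hxw, Ne.symm hyw]),
                Finset.card_insert_of_notMem (by simp [hxy]), Finset.card_singleton]
            have : ({w, x, y} : Finset W) = Finset.univ :=
              Finset.eq_univ_of_card _ (by rw [hcard, hW])
            intro z
            have hz : z ∈ ({w, x, y} : Finset W) := this ▸ Finset.mem_univ z
            simpa using hz
          intro a b hab
          rcases huniv a with rfl | rfl | rfl <;> rcases huniv b with rfl | rfl | rfl <;>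
            first
              | exact absurd rfl hab
              | exact h1 | exact h1.symm | exact h2 | exact h2.symm
              | exact h3' | exact h3'.symm

/-- Every vertex of degree 3 has at most one neighbor of degree 3; i.e., the subgraph
induced by the set `S` of degree-3 vertices has maximum degree at most 1. -/
theorem stmt_7 {V : Type*} [Fintype V] (G : SimpleGraph V)
    (hconn : KConnected G 2) (hloc : LocallyNonforesty G)
    (hK4 : ¬ Nonempty (G ≃g (⊤ : SimpleGraph (Fin 4)))) :
    ∀ v : V, (G.neighborSet v).ncard = 3 →
      ({u : V | (G.neighborSet u).ncard = 3} ∩ G.neighborSet v).ncard ≤ 1 := by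
  classical
  intro v hdeg
  by_contra hcon
  push_neg at hcon
  obtain ⟨a, b, ha, hb, hab⟩ := (Set.one_lt_ncard_iff (Set.toFinite _)).mp hcon
  obtain ⟨hda, haN⟩ := ha
  obtain ⟨hdb, hbN⟩ := hb
  simp only [Set.mem_setOf_eq] at hda hdb
  -- all pairs of neighbors of v are adjacent
  have hcard3 : Fintype.card ↥(G.neighborSet v) = 3 := by
    rw [← Nat.card_eq_fintype_card, Nat.card_coe_set_eq, hdeg]
  have hadj : ∀ x y : V, x ∈ G.neighborSet v → y ∈ G.neighborSet v → x ≠ y → G.Adj x y := by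
    intro x y hx hy hxy
    have := triangle_of_not_acyclic hcard3 (G.induce (G.neighborSet v)) (hloc v)
      ⟨x, hx⟩ ⟨y, hy⟩ (by simpa [Subtype.ext_iff] using hxy)
    simpa using this
  -- third neighbor c
  have hcex : ∃ c, c ∈ G.neighborSet v ∧ c ≠ a ∧ c ≠ b := by
    by_contra h
    push_neg at h
    have hsub : G.neighborSet v ⊆ {a, b} := by
      intro x hx
      rcases eq_or_ne x a with rfl | hxa
      · exact Set.mem_insert _ _
      · simp [h x hx hxa]
    have := Set.ncard_le_ncard hsub (Set.toFinite _)
    have h2 : ({a, b} : Set V).ncard ≤ 2 := by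
      calc ({a, b} : Set V).ncard ≤ ({b} : Set V).ncard + 1 := Set.ncard_insert_le _ _
        _ ≤ 2 := by rw [Set.ncard_singleton]
    omega
  obtain ⟨c, hcN, hca, hcb⟩ := hcex
  have hva : v ≠ a := fun h => G.irrefl (h ▸ (G.mem_neighborSet v a).mp haN)
  have hvb : v ≠ b := fun h => G.irrefl (h ▸ (G.mem_neighborSet v b).mp hbN)
  have hvc : v ≠ c := fun h => G.irrefl (h ▸ (G.mem_neighborSet v c).mp hcN)
  -- neighbor sets are determined
  have htri : ({a, b, c} : Set V).ncard = 3 := by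
    rw [Set.ncard_insert_of_notMem (by simp [hab, Ne.symm hca]),
      Set.ncard_insert_of_notMem (by simp [Ne.symm hcb]), Set.ncard_singleton]
  have hNv : G.neighborSet v = {a, b, c} := by
    refine (Set.eq_of_subset_of_ncard_le ?_ (by rw [hdeg, htri]) (Set.toFinite _)).symm
    intro x hx
    simp only [Set.mem_insert_iff, Set.mem_singleton_iff] at hx
    rcases hx with rfl | rfl | rfl <;> assumption
  have hNa : G.neighborSet a = {v, b, c} := by
    have htri' : ({v, b, c} : Set V).ncard = 3 := by
      rw [Set.ncard_insert_of_notMem (by simp [hvb, hvc]),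
        Set.ncard_insert_of_notMem (by simp [Ne.symm hcb]), Set.ncard_singleton]
    refine (Set.eq_of_subset_of_ncard_le ?_ (by rw [hda, htri']) (Set.toFinite _)).symm
    intro x hx
    simp only [Set.mem_insert_iff, Set.mem_singleton_iff] at hx
    rcases hx with rfl | rfl | rfl
    · exact ((G.mem_neighborSet _ _).mp haN).symm
    · exact hadj _ _ haN hbN hab
    · exact hadj _ _ haN hcN (Ne.symm hca)
  have hNb : G.neighborSet b = {v, a, c} := by
    have htri' : ({v, a, c} : Set V).ncard = 3 := by
      rw [Set.ncard_insert_of_notMem (by simp [hva, hvc]),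
        Set.ncard_insert_of_notMem (by simp [Ne.symm hca]), Set.ncard_singleton]
    refine (Set.eq_of_subset_of_ncard_le ?_ (by rw [hdb, htri']) (Set.toFinite _)).symm
    intro x hx
    simp only [Set.mem_insert_iff, Set.mem_singleton_iff] at hx
    rcases hx with rfl | rfl | rfl
    · exact ((G.mem_neighborSet _ _).mp hbN).symm
    · exact hadj _ _ hbN haN (Ne.symm hab)
    · exact hadj _ _ hbN hcN (Ne.symm hcb)
  have hAva : G.Adj v a := (G.mem_neighborSet v a).mp haN
  have hAvb : G.Adj v b := (G.mem_neighborSet v b).mp hbN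
  have hAvc : G.Adj v c := (G.mem_neighborSet v c).mp hcN
  have hAab : G.Adj a b := hadj _ _ haN hbN hab
  have hAac : G.Adj a c := hadj _ _ haN hcN (Ne.symm hca)
  have hAbc : G.Adj b c := hadj _ _ hbN hcN (Ne.symm hcb)
  by_cases hall : ∀ w : V, w = v ∨ w = a ∨ w = b ∨ w = c
  · -- then G is K4
    have hVcard : Fintype.card V = 4 := by
      have huniv : (Finset.univ : Finset V) = {v, a, b, c} := by
        ext x
        simpa using hall x
      rw [← Finset.card_univ, huniv,
        Finset.card_insert_of_notMem (by simp [hva, hvb, hvc]),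
        Finset.card_insert_of_notMem (by simp [hab, Ne.symm hca]),
        Finset.card_insert_of_notMem (by simp [Ne.symm hcb]), Finset.card_singleton]
    have hcomplete : ∀ x y : V, x ≠ y → G.Adj x y := by
      intro x y hxy
      rcases hall x with rfl | rfl | rfl | rfl <;> rcases hall y with rfl | rfl | rfl | rfl <;>
        first
          | exact absurd rfl hxy
          | exact hAva | exact hAva.symm | exact hAvb | exact hAvb.symm
          | exact hAvc | exact hAvc.symm | exact hAab | exact hAab.symm
          | exact hAac | exact hAac.symm | exact hAbc | exact hAbc.symm
    refine hK4 ⟨⟨Fintype.equivFinOfCardEq hVcard, ?_⟩⟩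
    intro x y
    simp only [top_adj, ne_eq, EmbeddingLike.apply_eq_iff_eq]
    exact ⟨fun h => hcomplete x y h, fun h => h.ne⟩
  · -- c is a cut vertex: contradiction with 2-connectivity
    push_neg at hall
    obtain ⟨w, hwv, hwa, hwb, hwc⟩ := hall
    have hcut := hconn.2 {c} (by simp)
    have hvmem : v ∈ ((↑({c} : Finset V) : Set V))ᶜ := by simp [hvc]
    have hwmem : w ∈ ((↑({c} : Finset V) : Set V))ᶜ := by simp [hwc]
    obtain ⟨p⟩ := hcut.preconnected ⟨v, hvmem⟩ ⟨w, hwmem⟩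
    have key : ∀ (x y : ↥((↑({c} : Finset V) : Set V)ᶜ))
        (q : (G.induce ((↑({c} : Finset V) : Set V)ᶜ)).Walk x y),
        ↑x ∈ ({v, a, b} : Set V) → ↑y ∈ ({v, a, b} : Set V) := by
      intro x y q
      induction q with
      | nil => exact id
      | cons h q ih =>
        rename_i x' z' y'
        intro hx
        apply ih
        have hadj' : G.Adj ↑x' ↑z' := h
        have hzc : (↑z' : V) ≠ c := by simpa using z'.2
        simp only [Set.mem_insert_iff, Set.mem_singleton_iff] at hx ⊢
        rcases hx with hx | hx | hx
        · have hz : (↑z' : V) ∈ G.neighborSet v := by rw [← hx]; exact hadj'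
          rw [hNv] at hz
          simp only [Set.mem_insert_iff, Set.mem_singleton_iff] at hz
          rcases hz with h' | h' | h' <;> simp [h'] at hzc ⊢
        · have hz : (↑z' : V) ∈ G.neighborSet a := by rw [← hx]; exact hadj'
          rw [hNa] at hz
          simp only [Set.mem_insert_iff, Set.mem_singleton_iff] at hz
          rcases hz with h' | h' | h' <;> simp [h'] at hzc ⊢
        · have hz : (↑z' : V) ∈ G.neighborSet b := by rw [← hx]; exact hadj'
          rw [hNb] at hz
          simp only [Set.mem_insert_iff, Set.mem_singleton_iff] at hz
          rcases hz with h' | h' | h' <;> simp [h'] at hzc ⊢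
    have hwin : (w : V) ∈ ({v, a, b} : Set V) := key _ _ p (by simp)
    simp only [Set.mem_insert_iff, Set.mem_singleton_iff] at hwin
    rcases hwin with h | h | h
    exacts [hwv h, hwa h, hwb h]
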